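/- Let ĥ(x) be a formal power series and X = x^{k+1}∂_x + y₂∂_{y₁} + Q(x)y₁∂_{y₂} the vector field of the companion system. The vector field Ŷ₂ = ĥ·x^{k+1}∂_x + (1/2)(x^{k+1}ĥ')·(y₁∂_{y₁} − y₂∂_{y₂}) + (1/2)((x^{k+1}d/dx)²ĥ)·y₁∂_{y₂} satisfies [X, Ŷ₂] = α(x)·X with α = x^{k+1}ĥ' if and only if ĥ satisfies the third-order linear equation (x^{k+1}d/dx)³ĥ − 4Q·(x^{k+1}d/dx)ĥ − 2ĥ·(x^{k+1}d/dx)Q = 0. -/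

import Mathlib

open ContinuousLinearMap in
lemma fderiv_companion (f g₁ g₂ g₃ g₄ : ℂ → ℂ) (p v : ℂ × ℂ × ℂ)
    (hf : DifferentiableAt ℂ f p.1) (h1 : DifferentiableAt ℂ g₁ p.1)
    (h2 : DifferentiableAt ℂ g₂ p.1) (h3 : DifferentiableAt ℂ g₃ p.1)
    (h4 : DifferentiableAt ℂ g₄ p.1) :
    fderiv ℂ (fun q : ℂ × ℂ × ℂ =>
      (f q.1, g₁ q.1 * q.2.1 + g₂ q.1 * q.2.2, g₃ q.1 * q.2.1 + g₄ q.1 * q.2.2)) p v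
    = (deriv f p.1 * v.1,
       (deriv g₁ p.1 * p.2.1 + deriv g₂ p.1 * p.2.2) * v.1 + g₁ p.1 * v.2.1 + g₂ p.1 * v.2.2,
       (deriv g₃ p.1 * p.2.1 + deriv g₄ p.1 * p.2.2) * v.1 + g₃ p.1 * v.2.1 + g₄ p.1 * v.2.2) := by
  have hfst : HasFDerivAt (fun q : ℂ × ℂ × ℂ => q.1) (fst ℂ ℂ (ℂ × ℂ)) p := hasFDerivAt_fst
  have hy1 : HasFDerivAt (fun q : ℂ × ℂ × ℂ => q.2.1)
      ((fst ℂ ℂ ℂ).comp (snd ℂ ℂ (ℂ × ℂ))) p := hasFDerivAt_fst.comp p hasFDerivAt_snd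
  have hy2 : HasFDerivAt (fun q : ℂ × ℂ × ℂ => q.2.2)
      ((snd ℂ ℂ ℂ).comp (snd ℂ ℂ (ℂ × ℂ))) p := hasFDerivAt_snd.comp p hasFDerivAt_snd
  have hcoef : ∀ g : ℂ → ℂ, DifferentiableAt ℂ g p.1 →
      HasFDerivAt (fun q : ℂ × ℂ × ℂ => g q.1) ((deriv g p.1) • fst ℂ ℂ (ℂ × ℂ)) p := by
    intro g hg
    exact (hg.hasDerivAt).comp_hasFDerivAt p hfst
  have H := (((hcoef f hf)).prodMk
    ((((hcoef g₁ h1).fun_mul hy1).fun_add ((hcoef g₂ h2).fun_mul hy2)).prodMk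
     (((hcoef g₃ h3).fun_mul hy1).fun_add ((hcoef g₄ h4).fun_mul hy2)))).fderiv
  rw [H]
  simp only [prod_apply, add_apply, smul_apply, coe_comp', Function.comp_apply,
    coe_fst', coe_snd', smul_eq_mul, Prod.mk.injEq]
  refine ⟨trivial, by ring, by ring⟩

/-- The Lie bracket of vector fields on `ℂ³`, viewed as maps `ℂ³ → ℂ³`. -/
noncomputable def lieB (F G : (ℂ × ℂ × ℂ) → (ℂ × ℂ × ℂ)) : (ℂ × ℂ × ℂ) → (ℂ × ℂ × ℂ) :=
  fun p => fderiv ℂ G p (F p) - fderiv ℂ F p (G p)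

/-- with `X = x^{k+1}∂ₓ + y₂∂_{y₁} + Q y₁∂_{y₂}` and
`Y = h·x^{k+1}∂ₓ + (1/2)(x^{k+1}h')(y₁∂_{y₁} − y₂∂_{y₂})
+ (1/2)((x^{k+1}d/dx)²h)·y₁∂_{y₂}`, one has `[X,Y] = (x^{k+1}h')·X` if and only if
`h` solves `(x^{k+1}d/dx)³h − 4Q(x^{k+1}d/dx)h − 2h(x^{k+1}d/dx)Q = 0`. -/
theorem stmt_12 (k : ℕ) (Q h : ℂ → ℂ)
    (hQ : ∀ x, AnalyticAt ℂ Q x) (hh : ∀ x, AnalyticAt ℂ h x)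
    (X Y : (ℂ × ℂ × ℂ) → (ℂ × ℂ × ℂ))
    (hX : ∀ p, X p = (p.1 ^ (k+1), p.2.2, Q p.1 * p.2.1))
    (hY : ∀ p, Y p = (h p.1 * p.1 ^ (k+1),
        (1/2) * (p.1 ^ (k+1) * deriv h p.1) * p.2.1,
        -(1/2) * (p.1 ^ (k+1) * deriv h p.1) * p.2.2
          + (1/2) * (p.1 ^ (k+1)
              * deriv (fun t => t ^ (k+1) * deriv h t) p.1) * p.2.1)) :
    (∀ p : ℂ × ℂ × ℂ, lieB X Y p = (p.1 ^ (k+1) * deriv h p.1) • X p) ↔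
    (∀ x : ℂ,
      x ^ (k+1) * deriv (fun t => t ^ (k+1)
          * deriv (fun u => u ^ (k+1) * deriv h u) t) x
        - 4 * Q x * (x ^ (k+1) * deriv h x)
        - 2 * h x * (x ^ (k+1) * deriv Q x) = 0) := by
  -- differentiability facts
  have hhD : ∀ x, DifferentiableAt ℂ h x := fun x => (hh x).differentiableAt
  have hQD : ∀ x, DifferentiableAt ℂ Q x := fun x => (hQ x).differentiableAt
  have hdh : ∀ x, AnalyticAt ℂ (deriv h) x := by
    intro x
    exact (AnalyticOnNhd.deriv (fun y _ => hh y) : AnalyticOnNhd ℂ (deriv h) Set.univ) x trivial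
  have hDfun : ∀ x, AnalyticAt ℂ (fun t => t ^ (k+1) * deriv h t) x := by
    intro x
    exact ((analyticAt_id.pow _)).mul (hdh x)
  have hdD : ∀ x, AnalyticAt ℂ (deriv (fun t => t ^ (k+1) * deriv h t)) x := by
    intro x
    exact (AnalyticOnNhd.deriv (fun y _ => hDfun y) :
      AnalyticOnNhd ℂ (deriv (fun t => t ^ (k+1) * deriv h t)) Set.univ) x trivial
  have hEfun : ∀ x, DifferentiableAt ℂ
      (fun t => t ^ (k+1) * deriv (fun u => u ^ (k+1) * deriv h u) t) x := by
    intro x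
    exact ((analyticAt_id.pow _).mul (hdD x)).differentiableAt
  -- fderiv of X applied to a vector
  have hXd : ∀ p v : ℂ × ℂ × ℂ, fderiv ℂ X p v =
      (((k : ℂ) + 1) * p.1 ^ k * v.1, v.2.2,
       deriv Q p.1 * p.2.1 * v.1 + Q p.1 * v.2.1) := by
    intro p v
    have hXe : X = fun q : ℂ × ℂ × ℂ => ((fun x => x ^ (k+1)) q.1,
        (fun _ : ℂ => (0:ℂ)) q.1 * q.2.1 + (fun _ : ℂ => (1:ℂ)) q.1 * q.2.2,
        Q q.1 * q.2.1 + (fun _ : ℂ => (0:ℂ)) q.1 * q.2.2) := by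
      funext q; rw [hX q]; simp
    rw [hXe, fderiv_companion _ _ _ _ _ p v (differentiableAt_pow _)
      (differentiableAt_const 0) (differentiableAt_const 1) (hQD p.1)
      (differentiableAt_const 0)]
    simp only [deriv_pow_field, deriv_const', Nat.cast_add, Nat.cast_one, Nat.add_sub_cancel,
      Prod.mk.injEq]
    refine ⟨trivial, by ring, by ring⟩
  -- fderiv of Y applied to a vector
  have hYd : ∀ p v : ℂ × ℂ × ℂ, fderiv ℂ Y p v =
      ((deriv h p.1 * p.1 ^ (k+1) + h p.1 * (((k : ℂ) + 1) * p.1 ^ k)) * v.1,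
       ((1/2) * deriv (fun t => t ^ (k+1) * deriv h t) p.1 * p.2.1) * v.1
         + (1/2) * (p.1 ^ (k+1) * deriv h p.1) * v.2.1,
       ((1/2) * deriv (fun t => t ^ (k+1) * deriv (fun u => u ^ (k+1) * deriv h u) t) p.1 * p.2.1
         - (1/2) * deriv (fun t => t ^ (k+1) * deriv h t) p.1 * p.2.2) * v.1
         + (1/2) * (p.1 ^ (k+1) * deriv (fun t => t ^ (k+1) * deriv h t) p.1) * v.2.1
         - (1/2) * (p.1 ^ (k+1) * deriv h p.1) * v.2.2) := by
    intro p v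
    have hYe : Y = fun q : ℂ × ℂ × ℂ => ((fun x => h x * x ^ (k+1)) q.1,
        (fun x => (1/2) * (x ^ (k+1) * deriv h x)) q.1 * q.2.1
          + (fun _ : ℂ => (0:ℂ)) q.1 * q.2.2,
        (fun x => (1/2) * (x ^ (k+1) * deriv (fun t => t ^ (k+1) * deriv h t) x)) q.1 * q.2.1
          + (fun x => -((1/2) * (x ^ (k+1) * deriv h x))) q.1 * q.2.2) := by
      funext q; rw [hY q]
      simp only [Prod.mk.injEq]
      refine ⟨trivial, by ring, by ring⟩
    have d1 : DifferentiableAt ℂ (fun x : ℂ => h x * x ^ (k+1)) p.1 :=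
      (hhD p.1).mul (differentiableAt_pow _)
    have d2 : DifferentiableAt ℂ (fun x : ℂ => (1/2) * (x ^ (k+1) * deriv h x)) p.1 :=
      ((hDfun p.1).differentiableAt).const_mul _
    have d3 : DifferentiableAt ℂ
        (fun x : ℂ => (1/2) * (x ^ (k+1) * deriv (fun t => t ^ (k+1) * deriv h t) x)) p.1 :=
      (hEfun p.1).const_mul _
    have d4 : DifferentiableAt ℂ (fun x : ℂ => -((1/2) * (x ^ (k+1) * deriv h x))) p.1 := d2.neg
    rw [hYe, fderiv_companion _ _ _ _ _ p v d1 d2 (differentiableAt_const 0) d3 d4]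
    have e1 : deriv (fun x : ℂ => h x * x ^ (k+1)) p.1
        = deriv h p.1 * p.1 ^ (k+1) + h p.1 * (((k : ℂ) + 1) * p.1 ^ k) := by
      rw [deriv_fun_mul (hhD p.1) (differentiableAt_pow _), deriv_pow_field]
      push_cast
      ring
    have e2 : deriv (fun x : ℂ => (1/2) * (x ^ (k+1) * deriv h x)) p.1
        = (1/2) * deriv (fun t => t ^ (k+1) * deriv h t) p.1 := by
      rw [deriv_const_mul _ (hDfun p.1).differentiableAt]
    have e3 : deriv (fun x : ℂ => (1/2) * (x ^ (k+1)
          * deriv (fun t => t ^ (k+1) * deriv h t) x)) p.1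
        = (1/2) * deriv (fun t => t ^ (k+1) * deriv (fun u => u ^ (k+1) * deriv h u) t) p.1 := by
      rw [deriv_const_mul _ (hEfun p.1)]
    have e4 : deriv (fun x : ℂ => -((1/2) * (x ^ (k+1) * deriv h x))) p.1
        = -((1/2) * deriv (fun t => t ^ (k+1) * deriv h t) p.1) := by
      rw [deriv.fun_neg, e2]
    rw [e1, e2, e3, e4]
    simp only [deriv_const', Prod.mk.injEq]
    refine ⟨trivial, by ring, by ring⟩
  -- the bracket, fully explicit
  have key : ∀ p : ℂ × ℂ × ℂ, lieB X Y p =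
      ((deriv h p.1 * p.1 ^ (k+1) + h p.1 * (((k : ℂ) + 1) * p.1 ^ k)) * p.1 ^ (k+1)
         - ((k : ℂ) + 1) * p.1 ^ k * (h p.1 * p.1 ^ (k+1)),
       ((1/2) * deriv (fun t => t ^ (k+1) * deriv h t) p.1 * p.2.1) * p.1 ^ (k+1)
         + (1/2) * (p.1 ^ (k+1) * deriv h p.1) * p.2.2
         - (-(1/2) * (p.1 ^ (k+1) * deriv h p.1) * p.2.2
            + (1/2) * (p.1 ^ (k+1) * deriv (fun t => t ^ (k+1) * deriv h t) p.1) * p.2.1),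
       (((1/2) * deriv (fun t => t ^ (k+1) * deriv (fun u => u ^ (k+1) * deriv h u) t) p.1 * p.2.1
           - (1/2) * deriv (fun t => t ^ (k+1) * deriv h t) p.1 * p.2.2) * p.1 ^ (k+1)
         + (1/2) * (p.1 ^ (k+1) * deriv (fun t => t ^ (k+1) * deriv h t) p.1) * p.2.2
         - (1/2) * (p.1 ^ (k+1) * deriv h p.1) * (Q p.1 * p.2.1))
         - (deriv Q p.1 * p.2.1 * (h p.1 * p.1 ^ (k+1))
            + Q p.1 * ((1/2) * (p.1 ^ (k+1) * deriv h p.1) * p.2.1))) := by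
    intro p
    show fderiv ℂ Y p (X p) - fderiv ℂ X p (Y p) = _
    rw [hXd p (Y p), hYd p (X p), hX p, hY p]
    simp only [Prod.mk_sub_mk, Prod.mk.injEq]
  constructor
  · intro H x
    have h3 := congrArg (fun z : ℂ × ℂ × ℂ => z.2.2) (H (x, 1, 0))
    simp only [key, hX, Prod.smul_mk, smul_eq_mul] at h3
    linear_combination 2 * h3
  · intro H p
    rw [key p, hX p]
    simp only [Prod.smul_mk, smul_eq_mul, Prod.mk.injEq]
    refine ⟨by ring, by ring, ?_⟩
    linear_combination (p.2.1 / 2) * H p.1
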